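/- The following are equivalent: (a) S′∖S ≠ ∅ and for every u ∈ S′∖S and every h ∈ {a₀, a₁, …, a_k} one has u + e_h ∈ S; (b) 𝕀 ≠ ∅, δ₁(w_i) = δ₂(w_i) = deg(w_i) + 1 for every i ∈ 𝕀, and there is no pair i, j ∈ 𝕀 such that w_j − w_i = e_h for some h ∈ {a₁,…,a_{k−1}}. -/

import Mathlib

namespace ProjMonomialCurve

/-- The numerical semigroup generated by `a 1, …, a k` (equivalently by `A₁ = {0,a 1,…,a k}`). -/
def S1 (k : ℕ) (a : ℕ → ℕ) : Set ℕ :=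
  {n | ∃ x : ℕ → ℕ, n = ∑ i ∈ Finset.Icc 1 k, x i * a i}

/-- The numerical semigroup generated by the nonzero elements `d - a i` (`0 ≤ i ≤ k-1`)
of `A₂`, where `d = a k`. -/
def S2 (k : ℕ) (a : ℕ → ℕ) : Set ℕ :=
  {n | ∃ x : ℕ → ℕ, n = ∑ i ∈ Finset.range k, x i * (a k - a i)}

/-- `δ₁ n`: least total number of summands over representations `n = ∑ xᵢ aᵢ`. -/
noncomputable def delta1 (k : ℕ) (a : ℕ → ℕ) (n : ℕ) : ℕ :=
  sInf {m | ∃ x : ℕ → ℕ, n = ∑ i ∈ Finset.Icc 1 k, x i * a i ∧ m = ∑ i ∈ Finset.Icc 1 k, x i}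

/-- `δ₂ n`: least total number of summands over representations of `n` by the
nonzero elements of `A₂`. -/
noncomputable def delta2 (k : ℕ) (a : ℕ → ℕ) (n : ℕ) : ℕ :=
  sInf {m | ∃ x : ℕ → ℕ,
    n = ∑ i ∈ Finset.range k, x i * (a k - a i) ∧ m = ∑ i ∈ Finset.range k, x i}

/-- `ω₁ i`: the least element of `S₍₁₎` congruent to `i` modulo `d = a k`. -/
noncomputable def omega1 (k : ℕ) (a : ℕ → ℕ) (i : ℕ) : ℕ :=
  sInf {n | n ∈ S1 k a ∧ n % a k = i % a k}

/-- `ω₂ i`: the least element of `S₍₂₎` congruent to `i` modulo `d = a k`. -/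
noncomputable def omega2 (k : ℕ) (a : ℕ → ℕ) (i : ℕ) : ℕ :=
  sInf {n | n ∈ S2 k a ∧ n % a k = i % a k}

/-- `w i = (ω₁(i), ω₂(d-i))`. -/
noncomputable def w (k : ℕ) (a : ℕ → ℕ) (i : ℕ) : ℕ × ℕ :=
  (omega1 k a i, omega2 k a (a k - i))

/-- `e h = (h, d - h)`. -/
def e (k : ℕ) (a : ℕ → ℕ) (h : ℕ) : ℕ × ℕ := (h, a k - h)

/-- The affine semigroup `S ⊆ ℕ²` generated by `e (a 0), …, e (a k)`. -/
def S (k : ℕ) (a : ℕ → ℕ) : Set (ℕ × ℕ) :=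
  {u | ∃ x : ℕ → ℕ, u = ∑ i ∈ Finset.range (k+1), x i • e k a (a i)}

/-- `S' = {u ∈ ℕ² | u + p•e₀ ∈ S and u + p•e_d ∈ S for some p ∈ ℕ}`. -/
def S' (k : ℕ) (a : ℕ → ℕ) : Set (ℕ × ℕ) :=
  {u | ∃ p : ℕ, u + p • e k a 0 ∈ S k a ∧ u + p • e k a (a k) ∈ S k a}

/-- `deg u = (u₁ + u₂)/d` for `u ∈ ℕ²`. -/
def deg (k : ℕ) (a : ℕ → ℕ) (u : ℕ × ℕ) : ℕ := (u.1 + u.2) / a k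

/-- The index set `𝕀`. -/
noncomputable def II (k : ℕ) (a : ℕ → ℕ) : Set ℕ :=
  {i | 1 ≤ i ∧ i ≤ a k - 1 ∧ (∀ j, 1 ≤ j → j ≤ k - 1 → i ≠ a j) ∧
    deg k a (w k a i) < delta1 k a (w k a i).1}

/-- `T = {u ∈ ℤ² | d ∣ u₁+u₂, u₁ ∉ S₍₁₎, u₂ ∉ S₍₂₎}`. -/
def T (k : ℕ) (a : ℕ → ℕ) : Set (ℤ × ℤ) :=
  {u | (a k : ℤ) ∣ u.1 + u.2 ∧ (∀ n ∈ S1 k a, (n : ℤ) ≠ u.1) ∧ (∀ n ∈ S2 k a, (n : ℤ) ≠ u.2)}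

/-- `deg` for integer points. -/
def degZ (k : ℕ) (a : ℕ → ℕ) (u : ℤ × ℤ) : ℤ := (u.1 + u.2) / (a k : ℤ)

/-- The Castelnuovo–Mumford regularity, expressed combinatorially:
`max({deg u + 1 : u ∈ S'∖S} ∪ {deg u + 2 : u ∈ T})`. -/
noncomputable def reg (k : ℕ) (a : ℕ → ℕ) : ℤ :=
  sSup ({z : ℤ | ∃ u ∈ S' k a \ S k a, z = (deg k a u : ℤ) + 1} ∪
        {z : ℤ | ∃ u ∈ T k a, z = degZ k a u + 2})

/-- Frobenius number of `S₍₁₎` (greatest integer not in it; `-1` if the semigroup is all of `ℕ`). -/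
noncomputable def F1 (k : ℕ) (a : ℕ → ℕ) : ℤ :=
  sSup {z : ℤ | ∀ n ∈ S1 k a, (n : ℤ) ≠ z}

/-- Frobenius number of `S₍₂₎`. -/
noncomputable def F2 (k : ℕ) (a : ℕ → ℕ) : ℤ :=
  sSup {z : ℤ | ∀ n ∈ S2 k a, (n : ℤ) ≠ z}

/-- The largest gap `λ_max = max_{1 ≤ i ≤ k} (a i - a (i-1) - 1)`. -/
def lamMax (k : ℕ) (a : ℕ → ℕ) : ℕ :=
  (Finset.Icc 1 k).sup (fun i => a i - a (i-1) - 1)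

/-- The second largest gap: the minimum over `i` of the largest gap among indices `≠ i`. -/
noncomputable def lamSl (k : ℕ) (a : ℕ → ℕ) : ℕ :=
  sInf {m | ∃ i, 1 ≤ i ∧ i ≤ k ∧
    m = ((Finset.Icc 1 k).erase i).sup (fun j => a j - a (j-1) - 1)}

/-- The set `A₁ = {a 0, a 1, …, a k}`. -/
def A1set (k : ℕ) (a : ℕ → ℕ) : Set ℕ := {m | ∃ j ≤ k, a j = m}


section Aux

variable (k : ℕ) (a : ℕ → ℕ)

lemma a_mono (hmono : ∀ i, i < k → a i < a (i+1)) :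
    ∀ i j, i < j → j ≤ k → a i < a j := by
  intro i j hij hj
  induction j with
  | zero => omega
  | succ n ih =>
    rcases Nat.lt_or_ge i n with h | h
    · exact lt_trans (ih h (by omega)) (hmono n (by omega))
    · have : i = n := by omega
      subst this; exact hmono i (by omega)

lemma a_le (hmono : ∀ i, i < k → a i < a (i+1)) {i : ℕ} (hi : i ≤ k) : a i ≤ a k := by
  rcases Nat.eq_or_lt_of_le hi with h | h
  · rw [h]
  · exact le_of_lt (a_mono k a hmono i k h le_rfl)

lemma d_pos (hk : 3 ≤ k) (ha0 : a 0 = 0) (hmono : ∀ i, i < k → a i < a (i+1)) :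
    0 < a k := by
  have := a_mono k a hmono 0 k (by omega) le_rfl
  omega

lemma range_succ_eq : Finset.range (k+1) = insert 0 (Finset.Icc 1 k) := by
  ext x; simp; omega

lemma sum_smul_e (x : ℕ → ℕ) :
    ∑ i ∈ Finset.range (k+1), x i • e k a (a i)
      = (∑ i ∈ Finset.range (k+1), x i * a i,
         ∑ i ∈ Finset.range (k+1), x i * (a k - a i)) := by
  apply Prod.ext
  · rw [Prod.fst_sum]; apply Finset.sum_congr rfl; intro i _; simp [e]
  · rw [Prod.snd_sum]; apply Finset.sum_congr rfl; intro i _; simp [e]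

lemma mem_S_iff (ha0 : a 0 = 0) (hmono : ∀ i, i < k → a i < a (i+1)) (u : ℕ × ℕ) :
    u ∈ S k a ↔ ∃ (m : ℕ) (y : ℕ → ℕ), u.1 = ∑ i ∈ Finset.Icc 1 k, y i * a i ∧
      (∑ i ∈ Finset.Icc 1 k, y i) ≤ m ∧ u.1 + u.2 = m * a k := by
  constructor
  · rintro ⟨x, hx⟩
    rw [sum_smul_e] at hx
    subst hx
    refine ⟨∑ i ∈ Finset.range (k+1), x i, x, ?_, ?_, ?_⟩
    · simp only [range_succ_eq, Finset.sum_insert (by simp : (0:ℕ) ∉ Finset.Icc 1 k), ha0]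
      simp
    · simp only [range_succ_eq, Finset.sum_insert (by simp : (0:ℕ) ∉ Finset.Icc 1 k)]
      omega
    · simp only []
      rw [← Finset.sum_add_distrib, Finset.sum_mul]
      apply Finset.sum_congr rfl
      intro i hi
      rw [← Nat.mul_add, Nat.add_sub_cancel' (a_le k a hmono (by simpa using Nat.lt_succ_iff.mp (Finset.mem_range.mp hi)))]
  · rintro ⟨m, y, h1, h2, h3⟩
    set s := ∑ i ∈ Finset.Icc 1 k, y i with hs
    refine ⟨fun i => if i = 0 then m - s else y i, ?_⟩
    rw [sum_smul_e]
    have h0 : (0:ℕ) ∉ Finset.Icc 1 k := by simp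
    have hA : ∑ i ∈ Finset.range (k+1), (if i = 0 then m - s else y i) * a i
        = u.1 := by
      rw [range_succ_eq, Finset.sum_insert h0]
      simp only [if_pos rfl, ha0, Nat.mul_zero, Nat.zero_add]
      rw [h1]
      apply Finset.sum_congr rfl
      intro i hi
      rw [if_neg (by simp at hi; omega)]
    have hB : ∑ i ∈ Finset.range (k+1), (if i = 0 then m - s else y i) * (a k - a i)
        = u.2 := by
      have key : u.1 + ∑ i ∈ Finset.range (k+1), (if i = 0 then m - s else y i) * (a k - a i)
          = u.1 + u.2 := by
        conv_lhs => rw [← hA]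
        rw [← Finset.sum_add_distrib, h3]
        have : ∀ i ∈ Finset.range (k+1),
            (if i = 0 then m - s else y i) * a i + (if i = 0 then m - s else y i) * (a k - a i)
            = (if i = 0 then m - s else y i) * a k := by
          intro i hi
          rw [← Nat.mul_add, Nat.add_sub_cancel' (a_le k a hmono (by simpa using Nat.lt_succ_iff.mp (Finset.mem_range.mp hi)))]
        rw [Finset.sum_congr rfl this, ← Finset.sum_mul]
        congr 1
        rw [range_succ_eq, Finset.sum_insert h0]
        have : ∑ i ∈ Finset.Icc 1 k, (if i = 0 then m - s else y i) = s := by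
          rw [hs]; apply Finset.sum_congr rfl; intro i hi
          rw [if_neg (by simp at hi; omega)]
        rw [this, if_pos rfl]
        omega
      omega
    exact Prod.ext hA.symm hB.symm

end Aux
section Aux2

variable (k : ℕ) (a : ℕ → ℕ)

lemma mem_S_iff2 (ha0 : a 0 = 0) (hmono : ∀ i, i < k → a i < a (i+1)) (u : ℕ × ℕ) :
    u ∈ S k a ↔ ∃ (m : ℕ) (z : ℕ → ℕ), u.2 = ∑ i ∈ Finset.range k, z i * (a k - a i) ∧
      (∑ i ∈ Finset.range k, z i) ≤ m ∧ u.1 + u.2 = m * a k := by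
  constructor
  · rintro ⟨x, hx⟩
    rw [sum_smul_e] at hx
    subst hx
    refine ⟨∑ i ∈ Finset.range (k+1), x i, x, ?_, ?_, ?_⟩
    · simp only [Finset.sum_range_succ, Nat.sub_self, Nat.mul_zero, Nat.add_zero]
    · rw [Finset.sum_range_succ]; omega
    · simp only []
      rw [← Finset.sum_add_distrib, Finset.sum_mul]
      apply Finset.sum_congr rfl
      intro i hi
      rw [← Nat.mul_add, Nat.add_sub_cancel' (a_le k a hmono (by simpa using Nat.lt_succ_iff.mp (Finset.mem_range.mp hi)))]
  · rintro ⟨m, z, h1, h2, h3⟩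
    set s := ∑ i ∈ Finset.range k, z i with hs
    refine ⟨fun i => if i = k then m - s else z i, ?_⟩
    rw [sum_smul_e]
    have hB : ∑ i ∈ Finset.range (k+1), (if i = k then m - s else z i) * (a k - a i)
        = u.2 := by
      rw [Finset.sum_range_succ, if_pos rfl, Nat.sub_self, Nat.mul_zero, Nat.add_zero, h1]
      apply Finset.sum_congr rfl
      intro i hi
      rw [if_neg (by simp at hi; omega)]
    have hA : ∑ i ∈ Finset.range (k+1), (if i = k then m - s else z i) * a i = u.1 := by
      have key : (∑ i ∈ Finset.range (k+1), (if i = k then m - s else z i) * a i) + u.2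
          = u.1 + u.2 := by
        conv_lhs => rw [← hB]
        rw [← Finset.sum_add_distrib, h3]
        have : ∀ i ∈ Finset.range (k+1),
            (if i = k then m - s else z i) * a i + (if i = k then m - s else z i) * (a k - a i)
            = (if i = k then m - s else z i) * a k := by
          intro i hi
          rw [← Nat.mul_add, Nat.add_sub_cancel' (a_le k a hmono (by simpa using Nat.lt_succ_iff.mp (Finset.mem_range.mp hi)))]
        rw [Finset.sum_congr rfl this, ← Finset.sum_mul]
        congr 1
        rw [Finset.sum_range_succ, if_pos rfl]
        have : ∑ i ∈ Finset.range k, (if i = k then m - s else z i) = s := by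
          rw [hs]; apply Finset.sum_congr rfl; intro i hi
          rw [if_neg (by simp at hi; omega)]
        rw [this]
        omega
      omega
    exact Prod.ext hA.symm hB.symm

lemma delta1_le {n : ℕ} (x : ℕ → ℕ) (hx : n = ∑ i ∈ Finset.Icc 1 k, x i * a i) :
    delta1 k a n ≤ ∑ i ∈ Finset.Icc 1 k, x i :=
  Nat.sInf_le ⟨x, hx, rfl⟩

lemma delta2_le {n : ℕ} (x : ℕ → ℕ) (hx : n = ∑ i ∈ Finset.range k, x i * (a k - a i)) :
    delta2 k a n ≤ ∑ i ∈ Finset.range k, x i :=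
  Nat.sInf_le ⟨x, hx, rfl⟩

lemma delta1_spec {n : ℕ} (hn : n ∈ S1 k a) :
    ∃ x : ℕ → ℕ, n = ∑ i ∈ Finset.Icc 1 k, x i * a i ∧
      delta1 k a n = ∑ i ∈ Finset.Icc 1 k, x i := by
  obtain ⟨x, hx⟩ := hn
  exact Nat.sInf_mem (⟨∑ i ∈ Finset.Icc 1 k, x i, x, hx, rfl⟩ :
    Set.Nonempty {m | ∃ x : ℕ → ℕ, n = ∑ i ∈ Finset.Icc 1 k, x i * a i ∧ m = ∑ i ∈ Finset.Icc 1 k, x i})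

lemma delta2_spec {n : ℕ} (hn : n ∈ S2 k a) :
    ∃ x : ℕ → ℕ, n = ∑ i ∈ Finset.range k, x i * (a k - a i) ∧
      delta2 k a n = ∑ i ∈ Finset.range k, x i := by
  obtain ⟨x, hx⟩ := hn
  exact Nat.sInf_mem (⟨∑ i ∈ Finset.range k, x i, x, hx, rfl⟩ :
    Set.Nonempty {m | ∃ x : ℕ → ℕ, n = ∑ i ∈ Finset.range k, x i * (a k - a i) ∧ m = ∑ i ∈ Finset.range k, x i})

lemma mem_S_iff_delta1 (hk : 3 ≤ k) (ha0 : a 0 = 0) (hmono : ∀ i, i < k → a i < a (i+1)) (u : ℕ × ℕ) :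
    u ∈ S k a ↔ u.1 ∈ S1 k a ∧ a k ∣ (u.1 + u.2) ∧ delta1 k a u.1 * a k ≤ u.1 + u.2 := by
  have hd := d_pos k a hk ha0 hmono
  rw [mem_S_iff k a ha0 hmono]
  constructor
  · rintro ⟨m, y, h1, h2, h3⟩
    refine ⟨⟨y, h1⟩, ⟨m, by rw [h3, Nat.mul_comm]⟩, ?_⟩
    calc delta1 k a u.1 * a k ≤ (∑ i ∈ Finset.Icc 1 k, y i) * a k :=
          Nat.mul_le_mul_right _ (delta1_le k a y h1)
      _ ≤ m * a k := Nat.mul_le_mul_right _ h2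
      _ = u.1 + u.2 := h3.symm
  · rintro ⟨h1, ⟨m, hm⟩, h3⟩
    rw [Nat.mul_comm] at hm
    obtain ⟨x, hx1, hx2⟩ := delta1_spec k a h1
    refine ⟨m, x, hx1, ?_, hm⟩
    rw [← hx2]
    have h4 : delta1 k a u.1 * a k ≤ m * a k := by omega
    exact Nat.le_of_mul_le_mul_right h4 hd

lemma mem_S_iff_delta2 (hk : 3 ≤ k) (ha0 : a 0 = 0) (hmono : ∀ i, i < k → a i < a (i+1)) (u : ℕ × ℕ) :
    u ∈ S k a ↔ u.2 ∈ S2 k a ∧ a k ∣ (u.1 + u.2) ∧ delta2 k a u.2 * a k ≤ u.1 + u.2 := by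
  have hd := d_pos k a hk ha0 hmono
  rw [mem_S_iff2 k a ha0 hmono]
  constructor
  · rintro ⟨m, z, h1, h2, h3⟩
    refine ⟨⟨z, h1⟩, ⟨m, by rw [h3, Nat.mul_comm]⟩, ?_⟩
    calc delta2 k a u.2 * a k ≤ (∑ i ∈ Finset.range k, z i) * a k :=
          Nat.mul_le_mul_right _ (delta2_le k a z h1)
      _ ≤ m * a k := Nat.mul_le_mul_right _ h2
      _ = u.1 + u.2 := h3.symm
  · rintro ⟨h1, ⟨m, hm⟩, h3⟩
    rw [Nat.mul_comm] at hm
    obtain ⟨x, hx1, hx2⟩ := delta2_spec k a h1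
    refine ⟨m, x, hx1, ?_, hm⟩
    rw [← hx2]
    have h4 : delta2 k a u.2 * a k ≤ m * a k := by omega
    exact Nat.le_of_mul_le_mul_right h4 hd

end Aux2
section Aux3

variable (k : ℕ) (a : ℕ → ℕ)

lemma S1_add {p q : ℕ} (hp : p ∈ S1 k a) (hq : q ∈ S1 k a) : p + q ∈ S1 k a := by
  obtain ⟨x, hx⟩ := hp; obtain ⟨y, hy⟩ := hq
  refine ⟨fun i => x i + y i, ?_⟩
  rw [hx, hy, ← Finset.sum_add_distrib]
  apply Finset.sum_congr rfl
  intro i _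
  exact (Nat.add_mul _ _ _).symm

lemma S2_add {p q : ℕ} (hp : p ∈ S2 k a) (hq : q ∈ S2 k a) : p + q ∈ S2 k a := by
  obtain ⟨x, hx⟩ := hp; obtain ⟨y, hy⟩ := hq
  refine ⟨fun i => x i + y i, ?_⟩
  rw [hx, hy, ← Finset.sum_add_distrib]
  apply Finset.sum_congr rfl
  intro i _
  exact (Nat.add_mul _ _ _).symm

lemma zero_mem_S1 : 0 ∈ S1 k a := ⟨fun _ => 0, by simp⟩

lemma zero_mem_S2 : 0 ∈ S2 k a := ⟨fun _ => 0, by simp⟩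

lemma single_sum_Icc {j : ℕ} (hj : j ∈ Finset.Icc 1 k) (f : ℕ → ℕ) :
    ∑ i ∈ Finset.Icc 1 k, (if i = j then 1 else 0) * f i = f j := by
  rw [Finset.sum_eq_single_of_mem j hj]
  · simp
  · intro b _ hb; simp [hb]

lemma single_count_Icc {j : ℕ} (hj : j ∈ Finset.Icc 1 k) :
    ∑ i ∈ Finset.Icc 1 k, (if i = j then 1 else 0) = 1 := by
  rw [Finset.sum_eq_single_of_mem j hj] <;> simp

lemma single_sum_range {j : ℕ} (hj : j ∈ Finset.range k) (f : ℕ → ℕ) :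
    ∑ i ∈ Finset.range k, (if i = j then 1 else 0) * f i = f j := by
  rw [Finset.sum_eq_single_of_mem j hj]
  · simp
  · intro b _ hb; simp [hb]

lemma single_count_range {j : ℕ} (hj : j ∈ Finset.range k) :
    ∑ i ∈ Finset.range k, (if i = j then 1 else 0) = 1 := by
  rw [Finset.sum_eq_single_of_mem j hj] <;> simp

lemma a_mem_S1 {j : ℕ} (hj1 : 1 ≤ j) (hj2 : j ≤ k) : a j ∈ S1 k a :=
  ⟨fun i => if i = j then 1 else 0, (single_sum_Icc k (by simp; omega) a).symm⟩

lemma delta1_a_le {j : ℕ} (hj1 : 1 ≤ j) (hj2 : j ≤ k) : delta1 k a (a j) ≤ 1 := by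
  have hj : j ∈ Finset.Icc 1 k := by simp; omega
  calc delta1 k a (a j) ≤ ∑ i ∈ Finset.Icc 1 k, (if i = j then 1 else 0) :=
        delta1_le k a _ (single_sum_Icc k hj a).symm
    _ = 1 := single_count_Icc k hj

lemma gen_mem_S2 {j : ℕ} (hj : j < k) : a k - a j ∈ S2 k a :=
  ⟨fun i => if i = j then 1 else 0,
    (single_sum_range k (by simpa using hj) (fun i => a k - a i)).symm⟩

lemma delta1_zero : delta1 k a 0 = 0 :=
  Nat.le_antisymm (by simpa using delta1_le k a (fun _ => 0) (by simp)) (Nat.zero_le _)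

lemma delta2_zero : delta2 k a 0 = 0 :=
  Nat.le_antisymm (by simpa using delta2_le k a (fun _ => 0) (by simp)) (Nat.zero_le _)

lemma delta1_add_mul_le (hk : 3 ≤ k) {n : ℕ} (hn : n ∈ S1 k a) (β : ℕ) :
    delta1 k a (n + β * a k) ≤ delta1 k a n + β := by
  obtain ⟨x, hx1, hx2⟩ := delta1_spec k a hn
  have hk' : k ∈ Finset.Icc 1 k := by simp; omega
  have hrep : n + β * a k = ∑ i ∈ Finset.Icc 1 k, (x i + if i = k then β else 0) * a i := by
    have : ∀ i ∈ Finset.Icc 1 k,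
        (x i + if i = k then β else 0) * a i = x i * a i + (if i = k then β else 0) * a i := by
      intro i _; rw [Nat.add_mul]
    rw [Finset.sum_congr rfl this, Finset.sum_add_distrib, ← hx1]
    congr 1
    rw [Finset.sum_eq_single_of_mem k hk']
    · simp
    · intro b _ hb; simp [hb]
  calc delta1 k a (n + β * a k) ≤ ∑ i ∈ Finset.Icc 1 k, (x i + if i = k then β else 0) :=
        delta1_le k a _ hrep
    _ = delta1 k a n + β := by
        rw [Finset.sum_add_distrib, ← hx2]
        congr 1
        rw [Finset.sum_eq_single_of_mem k hk'] <;> simp_all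

lemma delta2_add_mul_le (hk : 3 ≤ k) (ha0 : a 0 = 0) {n : ℕ} (hn : n ∈ S2 k a) (α : ℕ) :
    delta2 k a (n + α * a k) ≤ delta2 k a n + α := by
  obtain ⟨x, hx1, hx2⟩ := delta2_spec k a hn
  have hk' : (0:ℕ) ∈ Finset.range k := by simp; omega
  have hrep : n + α * a k = ∑ i ∈ Finset.range k, (x i + if i = 0 then α else 0) * (a k - a i) := by
    have : ∀ i ∈ Finset.range k,
        (x i + if i = 0 then α else 0) * (a k - a i)
          = x i * (a k - a i) + (if i = 0 then α else 0) * (a k - a i) := by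
      intro i _; rw [Nat.add_mul]
    rw [Finset.sum_congr rfl this, Finset.sum_add_distrib, ← hx1]
    congr 1
    rw [Finset.sum_eq_single_of_mem 0 hk']
    · simp [ha0]
    · intro b _ hb; simp [hb]
  calc delta2 k a (n + α * a k) ≤ ∑ i ∈ Finset.range k, (x i + if i = 0 then α else 0) :=
        delta2_le k a _ hrep
    _ = delta2 k a n + α := by
        rw [Finset.sum_add_distrib, ← hx2]
        congr 1
        rw [Finset.sum_eq_single_of_mem 0 hk'] <;> simp_all

lemma e_zero : e k a 0 = (0, a k) := by simp [e]

lemma e_d : e k a (a k) = (a k, 0) := by simp [e]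

lemma add_e (u : ℕ × ℕ) (h : ℕ) : u + e k a h = (u.1 + h, u.2 + (a k - h)) := rfl

lemma add_smul_pair (u : ℕ × ℕ) (p : ℕ) (v : ℕ × ℕ) :
    u + p • v = (u.1 + p * v.1, u.2 + p * v.2) := rfl

lemma S'_char (hk : 3 ≤ k) (ha0 : a 0 = 0) (hmono : ∀ i, i < k → a i < a (i+1)) (u : ℕ × ℕ) :
    u ∈ S' k a ↔ a k ∣ (u.1 + u.2) ∧ u.1 ∈ S1 k a ∧ u.2 ∈ S2 k a := by
  have hd := d_pos k a hk ha0 hmono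
  constructor
  · rintro ⟨p, h0, hdd⟩
    rw [add_smul_pair, e_zero] at h0
    rw [add_smul_pair, e_d] at hdd
    rw [mem_S_iff_delta1 k a hk ha0 hmono] at h0
    rw [mem_S_iff_delta2 k a hk ha0 hmono] at hdd
    obtain ⟨h1, ⟨m, hm⟩, -⟩ := h0
    obtain ⟨h2, -, -⟩ := hdd
    simp only [Nat.mul_zero, Nat.add_zero] at h1 h2 hm ⊢
    rw [Nat.mul_comm p (a k)] at hm
    have hp : a k * p ≤ a k * m := by omega
    have hpm : p ≤ m := Nat.le_of_mul_le_mul_left hp hd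
    refine ⟨⟨m - p, ?_⟩, h1, h2⟩
    have hmp : a k * (m - p) + a k * p = a k * m := by
      rw [← Nat.mul_add]; congr 1; omega
    omega
  · rintro ⟨⟨m, hm⟩, h1, h2⟩
    refine ⟨delta1 k a u.1 + delta2 k a u.2, ?_, ?_⟩
    · rw [add_smul_pair, e_zero, mem_S_iff_delta1 k a hk ha0 hmono]
      simp only [Nat.mul_zero, Nat.add_zero]
      refine ⟨h1, ⟨m + (delta1 k a u.1 + delta2 k a u.2), by rw [Nat.mul_add, ← hm]; ring⟩, ?_⟩
      nlinarith
    · rw [add_smul_pair, e_d, mem_S_iff_delta2 k a hk ha0 hmono]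
      simp only [Nat.mul_zero, Nat.add_zero]
      refine ⟨h2, ⟨m + (delta1 k a u.1 + delta2 k a u.2), by rw [Nat.mul_add, ← hm]; ring⟩, ?_⟩
      nlinarith

end Aux3
section Aux4

lemma finset_bezout (s : Finset ℕ) (f : ℕ → ℕ) :
    ∃ c : ℕ → ℤ, ((s.gcd f : ℕ) : ℤ) = ∑ i ∈ s, c i * (f i : ℤ) := by
  classical
  induction s using Finset.induction_on with
  | empty => exact ⟨fun _ => 0, by simp⟩
  | insert _ _ hj _ =>
    rename_i j s ih
    obtain ⟨c, hc⟩ := ih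
    refine ⟨fun i => if i = j then Nat.gcdA (f j) (s.gcd f)
      else Nat.gcdB (f j) (s.gcd f) * c i, ?_⟩
    rw [Finset.gcd_insert, Finset.sum_insert hj]
    have h1 : (GCDMonoid.gcd (f j) (s.gcd f) : ℕ) = Nat.gcd (f j) (s.gcd f) := rfl
    rw [h1]
    rw [Nat.gcd_eq_gcd_ab (f j) (s.gcd f)]
    have h2 : ∑ i ∈ s, (if i = j then Nat.gcdA (f j) (s.gcd f)
        else Nat.gcdB (f j) (s.gcd f) * c i) * (f i : ℤ)
        = Nat.gcdB (f j) (s.gcd f) * ∑ i ∈ s, c i * (f i : ℤ) := by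
      rw [Finset.mul_sum]
      apply Finset.sum_congr rfl
      intro i hi
      rw [if_neg (by rintro rfl; exact hj hi)]
      ring
    rw [h2, ← hc]
    simp only [if_pos rfl, if_true, eq_self_iff_true]
    ring

end Aux4

section Aux5

variable (k : ℕ) (a : ℕ → ℕ)

lemma cast_mem_S1 (n : ℕ) (hn : n ∈ S1 k a) :
    ((n : ℤ) : ZMod (a k)) = ((n : ZMod (a k))) := by push_cast; ring

lemma S1_residue (hk : 3 ≤ k) (ha0 : a 0 = 0) (hmono : ∀ i, i < k → a i < a (i+1))
    (hgcd : (Finset.Icc 1 k).gcd a = 1) (r : ℕ) :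
    ∃ n ∈ S1 k a, n % a k = r % a k := by
  have hd := d_pos k a hk ha0 hmono
  obtain ⟨c, hc⟩ := finset_bezout (Finset.Icc 1 k) a
  rw [hgcd] at hc
  set d := a k with hdd
  set x : ℕ → ℕ := fun i => ((c i * r) % (d : ℤ)).toNat with hx
  refine ⟨∑ i ∈ Finset.Icc 1 k, x i * a i, ⟨x, rfl⟩, ?_⟩
  rw [← Nat.ModEq]
  rw [← ZMod.natCast_eq_natCast_iff]
  push_cast
  have hxi : ∀ i, ((x i : ℕ) : ZMod d) = ((c i : ZMod d) * (r : ZMod d)) := by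
    intro i
    have h1 : ((x i : ℕ) : ℤ) = (c i * r) % (d : ℤ) := by
      rw [hx]
      exact Int.toNat_of_nonneg (Int.emod_nonneg _ (by exact_mod_cast hd.ne'))
    calc ((x i : ℕ) : ZMod d) = (((x i : ℕ) : ℤ) : ZMod d) := by push_cast; ring
      _ = (((c i * r) % (d : ℤ) : ℤ) : ZMod d) := by rw [h1]
      _ = ((c i * r : ℤ) : ZMod d) := by rw [ZMod.intCast_mod (c i * r) d]
      _ = (c i : ZMod d) * (r : ZMod d) := by push_cast; ring
  have : (∑ i ∈ Finset.Icc 1 k, (x i : ZMod d) * (a i : ZMod d))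
      = (r : ZMod d) := by
    have h2 : ∀ i ∈ Finset.Icc 1 k, (x i : ZMod d) * (a i : ZMod d)
        = (r : ZMod d) * ((c i : ZMod d) * (a i : ZMod d)) := by
      intro i _
      rw [hxi i]; ring
    rw [Finset.sum_congr rfl h2, ← Finset.mul_sum]
    have h3 : (∑ i ∈ Finset.Icc 1 k, (c i : ZMod d) * (a i : ZMod d)) = 1 := by
      have := congrArg (fun z : ℤ => (z : ZMod d)) hc
      push_cast at this
      exact this.symm
    rw [h3, mul_one]
  exact_mod_cast this

end Aux5
section Aux6

variable (k : ℕ) (a : ℕ → ℕ)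

lemma Icc_split (hk : 1 ≤ k) : Finset.Icc 1 k = insert k (Finset.Icc 1 (k-1)) := by
  ext x; simp; omega

lemma range_split (hk : 1 ≤ k) : Finset.range k = insert 0 (Finset.Icc 1 (k-1)) := by
  ext x; simp; omega

lemma S2_residue (hk : 3 ≤ k) (ha0 : a 0 = 0) (hmono : ∀ i, i < k → a i < a (i+1))
    (hgcd : (Finset.Icc 1 k).gcd a = 1) (r : ℕ) :
    ∃ n ∈ S2 k a, n % a k = r % a k := by
  have hd := d_pos k a hk ha0 hmono
  obtain ⟨c, hc⟩ := finset_bezout (Finset.Icc 1 k) a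
  rw [hgcd] at hc
  set d := a k with hdd
  set x : ℕ → ℕ := fun i => if i = 0 then 0 else ((-(c i * r)) % (d : ℤ)).toNat with hx
  refine ⟨∑ i ∈ Finset.range k, x i * (a k - a i), ⟨x, rfl⟩, ?_⟩
  rw [← Nat.ModEq, ← ZMod.natCast_eq_natCast_iff]
  have hcast : ∀ i ∈ Finset.range k, ((x i * (a k - a i) : ℕ) : ZMod d)
      = (x i : ZMod d) * (-(a i : ZMod d)) := by
    intro i hi
    have hle : a i ≤ a k := a_le k a hmono (le_of_lt (Finset.mem_range.mp hi))
    push_cast [Nat.cast_sub hle]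
    rw [show ((d : ℕ) : ZMod d) = 0 from ZMod.natCast_self d]
    ring
  rw [Nat.cast_sum, Finset.sum_congr rfl hcast]
  have h0 : (0:ℕ) ∉ Finset.Icc 1 (k-1) := by simp
  have hkk : k ∉ Finset.Icc 1 (k-1) := by simp; omega
  rw [range_split k (by omega), Finset.sum_insert h0]
  have hx0 : x 0 = 0 := by rw [hx]; simp
  rw [hx0]
  simp only [Nat.cast_zero, zero_mul, zero_add]
  have hterm : ∀ i ∈ Finset.Icc 1 (k-1), (x i : ZMod d) * (-(a i : ZMod d))
      = (r : ZMod d) * ((c i : ZMod d) * (a i : ZMod d)) := by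
    intro i hi
    have hi0 : i ≠ 0 := by simp at hi; omega
    have h1 : ((x i : ℕ) : ℤ) = (-(c i * r)) % (d : ℤ) := by
      rw [hx]; simp only [if_neg hi0]
      exact Int.toNat_of_nonneg (Int.emod_nonneg _ (by exact_mod_cast hd.ne'))
    have h2 : ((x i : ℕ) : ZMod d) = ((-(c i * r) : ℤ) : ZMod d) := by
      calc ((x i : ℕ) : ZMod d) = (((x i : ℕ) : ℤ) : ZMod d) := by push_cast; ring
        _ = (((-(c i * r)) % (d : ℤ) : ℤ) : ZMod d) := by rw [h1]
        _ = ((-(c i * r) : ℤ) : ZMod d) := by rw [ZMod.intCast_mod]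
    rw [h2]
    push_cast
    ring
  rw [Finset.sum_congr rfl hterm, ← Finset.mul_sum]
  have h3 : (∑ i ∈ Finset.Icc 1 (k-1), (c i : ZMod d) * (a i : ZMod d)) = 1 := by
    have := congrArg (fun z : ℤ => (z : ZMod d)) hc
    push_cast at this
    rw [Icc_split k (by omega), Finset.sum_insert hkk] at this
    rw [show ((d : ℕ) : ZMod d) = 0 from ZMod.natCast_self d] at this
    simp only [mul_zero, zero_add] at this
    exact this.symm
  rw [h3, mul_one]

end Aux6
section Aux7

lemma exists_step {d m n : ℕ} (hd : 0 < d) (hmn : m ≤ n) (h : n % d = m % d) :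
    ∃ β : ℕ, n = m + β * d := by
  refine ⟨n / d - m / d, ?_⟩
  have e1 := Nat.div_add_mod n d
  have e2 := Nat.div_add_mod m d
  have h3 : m / d ≤ n / d := by
    by_contra hcon
    push_neg at hcon
    have hA := Nat.mul_le_mul_left d (show n / d + 1 ≤ m / d by omega)
    have hB : d * (n / d + 1) = d * (n / d) + d := by ring
    omega
  have h7 : (n / d - m / d) * d = (n / d) * d - (m / d) * d := Nat.sub_mul _ _ _
  have c1 : (n / d) * d = d * (n / d) := Nat.mul_comm _ _
  have c2 : (m / d) * d = d * (m / d) := Nat.mul_comm _ _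
  have h6 := Nat.mul_le_mul_left d h3
  omega

lemma mod_sub_helper {d i n : ℕ} (hd : 0 < d) (hi : i < d) (h : d ∣ n + i) :
    n % d = (d - i) % d := by
  obtain ⟨t, ht⟩ := h
  rcases Nat.eq_zero_or_pos i with hi0 | hi0
  · subst hi0
    rw [Nat.add_zero] at ht
    subst ht
    simp [Nat.mul_mod_right]
  · have h0 : (n + i) % d = 0 := by rw [ht]; exact Nat.mul_mod_right d t
    have h1 : (n % d + i) % d = 0 := by
      conv_lhs => rw [show i = i % d from (Nat.mod_eq_of_lt hi).symm]
      rw [← Nat.add_mod]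
      exact h0
    have hr : n % d < d := Nat.mod_lt _ hd
    obtain ⟨s, hs⟩ := Nat.dvd_of_mod_eq_zero h1
    have hs1 : s = 1 := by
      rcases s with _ | s
      · omega
      · rcases s with _ | s
        · rfl
        · exfalso
          have h2 : d * 2 ≤ d * (s + 1 + 1) := Nat.mul_le_mul_left d (by omega)
          omega
    rw [hs1, Nat.mul_one] at hs
    rw [Nat.mod_eq_of_lt (by omega : d - i < d)]
    omega

lemma dvd_pair_helper {d i p q : ℕ} (hd : 0 < d) (hi : i < d)
    (hp : p % d = i % d) (hq : q % d = (d - i) % d) : d ∣ p + q := by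
  apply Nat.dvd_of_mod_eq_zero
  rw [Nat.add_mod, hp, hq]
  rcases Nat.eq_zero_or_pos i with hi0 | hi0
  · subst hi0
    simp
  · rw [Nat.mod_eq_of_lt hi, Nat.mod_eq_of_lt (by omega : d - i < d)]
    have : i + (d - i) = d := by omega
    rw [this, Nat.mod_self]

end Aux7
section Aux8

variable (k : ℕ) (a : ℕ → ℕ)

lemma omega1_spec (hk : 3 ≤ k) (ha0 : a 0 = 0) (hmono : ∀ i, i < k → a i < a (i+1))
    (hgcd : (Finset.Icc 1 k).gcd a = 1) (i : ℕ) :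
    omega1 k a i ∈ S1 k a ∧ omega1 k a i % a k = i % a k := by
  obtain ⟨n, hn1, hn2⟩ := S1_residue k a hk ha0 hmono hgcd i
  exact Nat.sInf_mem (⟨n, hn1, hn2⟩ : Set.Nonempty {n | n ∈ S1 k a ∧ n % a k = i % a k})

lemma omega2_spec (hk : 3 ≤ k) (ha0 : a 0 = 0) (hmono : ∀ i, i < k → a i < a (i+1))
    (hgcd : (Finset.Icc 1 k).gcd a = 1) (i : ℕ) :
    omega2 k a i ∈ S2 k a ∧ omega2 k a i % a k = i % a k := by
  obtain ⟨n, hn1, hn2⟩ := S2_residue k a hk ha0 hmono hgcd i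
  exact Nat.sInf_mem (⟨n, hn1, hn2⟩ : Set.Nonempty {n | n ∈ S2 k a ∧ n % a k = i % a k})

lemma omega1_le {i n : ℕ} (hn : n ∈ S1 k a) (hmod : n % a k = i % a k) :
    omega1 k a i ≤ n := Nat.sInf_le ⟨hn, hmod⟩

lemma omega2_le {i n : ℕ} (hn : n ∈ S2 k a) (hmod : n % a k = i % a k) :
    omega2 k a i ≤ n := Nat.sInf_le ⟨hn, hmod⟩

lemma deg_eq {u : ℕ × ℕ} {m : ℕ} (hd : 0 < a k) (h : u.1 + u.2 = m * a k) :
    deg k a u = m := by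
  rw [deg, h, Nat.mul_div_cancel _ hd]

lemma w_dvd (hk : 3 ≤ k) (ha0 : a 0 = 0) (hmono : ∀ i, i < k → a i < a (i+1))
    (hgcd : (Finset.Icc 1 k).gcd a = 1) {i : ℕ} (hi1 : 1 ≤ i) (hi2 : i < a k) :
    omega1 k a i + omega2 k a (a k - i) = deg k a (w k a i) * a k := by
  have hd := d_pos k a hk ha0 hmono
  have h1 := omega1_spec k a hk ha0 hmono hgcd i
  have h2 := omega2_spec k a hk ha0 hmono hgcd (a k - i)
  have hdvd : a k ∣ omega1 k a i + omega2 k a (a k - i) := by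
    apply dvd_pair_helper hd hi2 h1.2
    rw [h2.2, Nat.mod_eq_of_lt (by omega : a k - i < a k)]
  obtain ⟨m, hm⟩ := hdvd
  rw [Nat.mul_comm] at hm
  have : deg k a (w k a i) = m := deg_eq k a hd (by simpa [w] using hm)
  rw [this, ← hm]

/-- Key lemma A : if `i ∈ II` then `w i ∈ S' \ S`. -/
lemma w_mem_sub (hk : 3 ≤ k) (ha0 : a 0 = 0) (hmono : ∀ i, i < k → a i < a (i+1))
    (hgcd : (Finset.Icc 1 k).gcd a = 1) {i : ℕ} (hi : i ∈ II k a) :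
    w k a i ∈ S' k a \ S k a := by
  have hd := d_pos k a hk ha0 hmono
  obtain ⟨hi1, hi2, -, hi4⟩ := hi
  have hilt : i < a k := by omega
  have h1 := omega1_spec k a hk ha0 hmono hgcd i
  have h2 := omega2_spec k a hk ha0 hmono hgcd (a k - i)
  have hdvd : a k ∣ (w k a i).1 + (w k a i).2 := by
    show a k ∣ omega1 k a i + omega2 k a (a k - i)
    rw [w_dvd k a hk ha0 hmono hgcd hi1 hilt]
    exact ⟨deg k a (w k a i), Nat.mul_comm _ _⟩
  constructor
  · rw [S'_char k a hk ha0 hmono]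
    exact ⟨hdvd, h1.1, h2.1⟩
  · intro hS
    rw [mem_S_iff_delta1 k a hk ha0 hmono] at hS
    obtain ⟨-, -, h3⟩ := hS
    have h4 : (w k a i).1 + (w k a i).2 = deg k a (w k a i) * a k := by
      show omega1 k a i + omega2 k a (a k - i) = _
      exact w_dvd k a hk ha0 hmono hgcd hi1 hilt
    rw [h4] at h3
    have h5 : delta1 k a (w k a i).1 ≤ deg k a (w k a i) :=
      Nat.le_of_mul_le_mul_right h3 hd
    omega

end Aux8
section Aux9

variable (k : ℕ) (a : ℕ → ℕ)

lemma omega1_at_gen (hk : 3 ≤ k) (ha0 : a 0 = 0) (hmono : ∀ i, i < k → a i < a (i+1))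
    (hgcd : (Finset.Icc 1 k).gcd a = 1) {j : ℕ} (hj1 : 1 ≤ j) (hj2 : j ≤ k - 1) :
    omega1 k a (a j) = a j := by
  have hd := d_pos k a hk ha0 hmono
  have hlt : a j < a k := a_mono k a hmono j k (by omega) le_rfl
  have hle : omega1 k a (a j) ≤ a j :=
    omega1_le k a (a_mem_S1 k a hj1 (by omega)) rfl
  have hmod := (omega1_spec k a hk ha0 hmono hgcd (a j)).2
  rw [Nat.mod_eq_of_lt hlt] at hmod
  have : omega1 k a (a j) % a k = omega1 k a (a j) :=
    Nat.mod_eq_of_lt (by omega)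
  omega

lemma omega2_at_gen (hk : 3 ≤ k) (ha0 : a 0 = 0) (hmono : ∀ i, i < k → a i < a (i+1))
    (hgcd : (Finset.Icc 1 k).gcd a = 1) {j : ℕ} (hj1 : 1 ≤ j) (hj2 : j ≤ k - 1) :
    omega2 k a (a k - a j) = a k - a j := by
  have hd := d_pos k a hk ha0 hmono
  have hlt : a j < a k := a_mono k a hmono j k (by omega) le_rfl
  have hpos : 0 < a j := by
    have := a_mono k a hmono 0 j (by omega) (by omega)
    omega
  have hle : omega2 k a (a k - a j) ≤ a k - a j :=
    omega2_le k a (gen_mem_S2 k a (by omega)) rfl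
  have hmod := (omega2_spec k a hk ha0 hmono hgcd (a k - a j)).2
  rw [Nat.mod_eq_of_lt (by omega : a k - a j < a k)] at hmod
  have : omega2 k a (a k - a j) % a k = omega2 k a (a k - a j) :=
    Nat.mod_eq_of_lt (by omega)
  omega

lemma omega1_zero : omega1 k a 0 = 0 :=
  Nat.le_antisymm (Nat.sInf_le ⟨zero_mem_S1 k a, rfl⟩) (Nat.zero_le _)

/-- Key structure lemma: any `u ∈ S' \ S` lies over an index in `II`,
with controlled coordinates. -/
lemma structure1 (hk : 3 ≤ k) (ha0 : a 0 = 0) (hmono : ∀ i, i < k → a i < a (i+1))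
    (hgcd : (Finset.Icc 1 k).gcd a = 1) {u : ℕ × ℕ}
    (huS' : u ∈ S' k a) (huS : u ∉ S k a) :
    ∃ α β : ℕ, (u.1 % a k) ∈ II k a ∧
      u.1 = omega1 k a (u.1 % a k) + β * a k ∧
      u.2 = omega2 k a (a k - u.1 % a k) + α * a k ∧
      deg k a u = deg k a (w k a (u.1 % a k)) + α + β ∧
      deg k a (w k a (u.1 % a k)) + α < delta1 k a (omega1 k a (u.1 % a k)) ∧
      deg k a (w k a (u.1 % a k)) + β < delta2 k a (omega2 k a (a k - u.1 % a k)) := by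
  have hd := d_pos k a hk ha0 hmono
  rw [S'_char k a hk ha0 hmono] at huS'
  obtain ⟨hdvd, h1, h2⟩ := huS'
  set i := u.1 % a k with hi
  have hilt : i < a k := Nat.mod_lt _ hd
  have hw1 := omega1_spec k a hk ha0 hmono hgcd i
  have hw2 := omega2_spec k a hk ha0 hmono hgcd (a k - i)
  -- u.1 = omega1 i + β * d
  have hle1 : omega1 k a i ≤ u.1 :=
    omega1_le k a h1 (by rw [hi, Nat.mod_mod_of_dvd _ dvd_rfl])
  have hmod1 : u.1 % a k = omega1 k a i % a k := by
    rw [hw1.2, ← hi, Nat.mod_mod_of_dvd _ dvd_rfl]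
  obtain ⟨β, hβ⟩ := exists_step hd hle1 hmod1
  -- u.2 = omega2 (d - i) + α * d
  obtain ⟨m, hm⟩ := hdvd
  have hiu : i ≤ u.1 := Nat.mod_le _ _
  have ht : u.1 = a k * (u.1 / a k) + i := by
    have := Nat.div_add_mod u.1 (a k); omega
  set t := u.1 / a k with htt
  have htm : t ≤ m := by
    have h5 : a k * t ≤ a k * m := by omega
    exact Nat.le_of_mul_le_mul_left h5 hd
  have hu2i : a k ∣ u.2 + i := by
    refine ⟨m - t, ?_⟩
    have h6 : a k * (m - t) + a k * t = a k * m := by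
      rw [← Nat.mul_add]; congr 1; omega
    omega
  have hu2mod : u.2 % a k = (a k - i) % a k := mod_sub_helper hd hilt hu2i
  have hle2 : omega2 k a (a k - i) ≤ u.2 := omega2_le k a h2 hu2mod
  have hmod2 : u.2 % a k = omega2 k a (a k - i) % a k := by
    rw [hu2mod, hw2.2]
  obtain ⟨α, hα⟩ := exists_step hd hle2 hmod2
  -- rule out i = 0
  rcases Nat.eq_zero_or_pos i with hi0 | hi0
  · exfalso
    apply huS
    rw [mem_S_iff_delta1 k a hk ha0 hmono]
    refine ⟨h1, ⟨m, hm⟩, ?_⟩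
    have hω0 : omega1 k a i = 0 := by rw [hi0]; exact omega1_zero k a
    have hδ : delta1 k a u.1 ≤ β := by
      have := delta1_add_mul_le k a hk (zero_mem_S1 k a) β
      rw [delta1_zero, Nat.zero_add] at this
      rw [hβ, hω0, Nat.zero_add]
      simpa using this
    calc delta1 k a u.1 * a k ≤ β * a k := Nat.mul_le_mul_right _ hδ
      _ ≤ u.1 + u.2 := by omega
  -- now 1 ≤ i
  have hdegw := w_dvd k a hk ha0 hmono hgcd hi0 hilt
  set D := deg k a (w k a i) with hD
  have hdegu : deg k a u = D + α + β := by
    apply deg_eq k a hd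
    calc u.1 + u.2 = (omega1 k a i + omega2 k a (a k - i)) + (α + β) * a k := by
          rw [hβ, hα]; ring
      _ = D * a k + (α + β) * a k := by rw [hdegw]
      _ = (D + α + β) * a k := by ring
  have hsum : u.1 + u.2 = (D + α + β) * a k := by
    calc u.1 + u.2 = (omega1 k a i + omega2 k a (a k - i)) + (α + β) * a k := by
          rw [hβ, hα]; ring
      _ = D * a k + (α + β) * a k := by rw [hdegw]
      _ = (D + α + β) * a k := by ring
  -- delta bounds from u ∉ S
  have hnot1 : ¬ delta1 k a u.1 * a k ≤ u.1 + u.2 := by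
    intro hcon
    exact huS ((mem_S_iff_delta1 k a hk ha0 hmono u).mpr ⟨h1, ⟨m, hm⟩, hcon⟩)
  have hnot2 : ¬ delta2 k a u.2 * a k ≤ u.1 + u.2 := by
    intro hcon
    exact huS ((mem_S_iff_delta2 k a hk ha0 hmono u).mpr ⟨h2, ⟨m, hm⟩, hcon⟩)
  have hgt1 : D + α + β < delta1 k a u.1 := by
    by_contra hcon
    push_neg at hcon
    exact hnot1 (by rw [hsum]; exact Nat.mul_le_mul_right _ hcon)
  have hgt2 : D + α + β < delta2 k a u.2 := by
    by_contra hcon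
    push_neg at hcon
    exact hnot2 (by rw [hsum]; exact Nat.mul_le_mul_right _ hcon)
  have hb1 : delta1 k a u.1 ≤ delta1 k a (omega1 k a i) + β := by
    rw [hβ]; exact delta1_add_mul_le k a hk hw1.1 β
  have hb2 : delta2 k a u.2 ≤ delta2 k a (omega2 k a (a k - i)) + α := by
    rw [hα]; exact delta2_add_mul_le k a hk ha0 hw2.1 α
  have E1 : D + α < delta1 k a (omega1 k a i) := by omega
  have E2 : D + β < delta2 k a (omega2 k a (a k - i)) := by omega
  -- II membership
  have hII : i ∈ II k a := by
    refine ⟨hi0, by omega, ?_, ?_⟩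
    · intro j hj1 hj2 hij
      have hω1 : omega1 k a i = a j := by rw [hij]; exact omega1_at_gen k a hk ha0 hmono hgcd hj1 hj2
      have hω2 : omega2 k a (a k - i) = a k - a j := by
        rw [hij]; exact omega2_at_gen k a hk ha0 hmono hgcd hj1 hj2
      have hlt : a j < a k := a_mono k a hmono j k (by omega) le_rfl
      have hD1 : D * a k = 1 * a k := by
        rw [← hdegw, hω1, hω2, Nat.one_mul]
        omega
      have hDval : D = 1 := Nat.eq_of_mul_eq_mul_right hd hD1
      have hδa : delta1 k a (omega1 k a i) ≤ 1 := by
        rw [hω1]; exact delta1_a_le k a hj1 (by omega)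
      omega
    · show deg k a (w k a i) < delta1 k a (w k a i).1
      have : (w k a i).1 = omega1 k a i := rfl
      rw [this, ← hD]
      omega
  exact ⟨α, β, hII, hβ, hα, hdegu, E1, E2⟩

end Aux9
section Aux10

variable (k : ℕ) (a : ℕ → ℕ)

/-- Under condition (b)-middle, every element of `S' \ S` is some `w i`, `i ∈ II`. -/
lemma structure2 (hk : 3 ≤ k) (ha0 : a 0 = 0) (hmono : ∀ i, i < k → a i < a (i+1))
    (hgcd : (Finset.Icc 1 k).gcd a = 1)
    (hDelta : ∀ i ∈ II k a, delta1 k a (w k a i).1 = deg k a (w k a i) + 1 ∧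
      delta2 k a (w k a i).2 = deg k a (w k a i) + 1)
    {u : ℕ × ℕ} (huS' : u ∈ S' k a) (huS : u ∉ S k a) :
    (u.1 % a k) ∈ II k a ∧ u = w k a (u.1 % a k) := by
  obtain ⟨α, β, hII, hβ, hα, hdegu, E1, E2⟩ :=
    structure1 k a hk ha0 hmono hgcd huS' huS
  obtain ⟨hδ1, hδ2⟩ := hDelta _ hII
  have hw1 : (w k a (u.1 % a k)).1 = omega1 k a (u.1 % a k) := rfl
  have hw2 : (w k a (u.1 % a k)).2 = omega2 k a (a k - u.1 % a k) := rfl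
  rw [hw1] at hδ1
  rw [hw2] at hδ2
  have hα0 : α = 0 := by omega
  have hβ0 : β = 0 := by omega
  rw [hβ0, Nat.zero_mul, Nat.add_zero] at hβ
  rw [hα0, Nat.zero_mul, Nat.add_zero] at hα
  refine ⟨hII, ?_⟩
  apply Prod.ext
  · rw [hw1]; exact hβ
  · rw [hw2]; exact hα

end Aux10
theorem statement_4 (k : ℕ) (a : ℕ → ℕ) (hk : 3 ≤ k) (ha0 : a 0 = 0)
    (hmono : ∀ i, i < k → a i < a (i+1)) (hgcd : (Finset.Icc 1 k).gcd a = 1) :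
    ((S' k a \ S k a).Nonempty ∧
        ∀ u ∈ S' k a \ S k a, ∀ j ≤ k, u + e k a (a j) ∈ S k a) ↔
    ((II k a).Nonempty ∧
        (∀ i ∈ II k a, delta1 k a (w k a i).1 = deg k a (w k a i) + 1 ∧
          delta2 k a (w k a i).2 = deg k a (w k a i) + 1) ∧
        ¬ ∃ i ∈ II k a, ∃ j ∈ II k a, ∃ h, 1 ≤ h ∧ h ≤ k - 1 ∧
          w k a j = w k a i + e k a (a h)) := by
  have hd := d_pos k a hk ha0 hmono
  constructor
  · rintro ⟨⟨u, hu⟩, hstep⟩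
    refine ⟨?_, ?_, ?_⟩
    · obtain ⟨α, β, hII, -⟩ := structure1 k a hk ha0 hmono hgcd hu.1 hu.2
      exact ⟨_, hII⟩
    · intro i hi
      have hw := w_mem_sub k a hk ha0 hmono hgcd hi
      obtain ⟨hi1, hi2, -, hi4⟩ := hi
      have hilt : i < a k := by omega
      have hdegw := w_dvd k a hk ha0 hmono hgcd hi1 hilt
      have hw1 := omega1_spec k a hk ha0 hmono hgcd i
      have hw2 := omega2_spec k a hk ha0 hmono hgcd (a k - i)
      set D := deg k a (w k a i) with hD
      have hfst : (w k a i).1 = omega1 k a i := rfl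
      have hsnd : (w k a i).2 = omega2 k a (a k - i) := rfl
      rw [hfst] at hi4
      have hsum1 : omega1 k a i + (omega2 k a (a k - i) + a k) = (D + 1) * a k := by
        rw [(by ring : (D + 1) * a k = D * a k + a k), ← hdegw]
        omega
      have hsum2 : omega1 k a i + a k + omega2 k a (a k - i) = (D + 1) * a k := by
        rw [(by ring : (D + 1) * a k = D * a k + a k), ← hdegw]
        omega
      constructor
      · -- use j = 0
        have h0 := hstep (w k a i) hw 0 (by omega)
        have hc : w k a i + e k a (a 0) = (omega1 k a i, omega2 k a (a k - i) + a k) := by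
          rw [add_e, ha0, hfst, hsnd]
          simp
        rw [hc, mem_S_iff_delta1 k a hk ha0 hmono] at h0
        obtain ⟨-, -, h03⟩ := h0
        simp only [] at h03
        rw [hsum1] at h03
        have hle : delta1 k a (omega1 k a i) ≤ D + 1 := Nat.le_of_mul_le_mul_right h03 hd
        rw [hfst]
        omega
      · -- use j = k
        have h0 := hstep (w k a i) hw k le_rfl
        have hc : w k a i + e k a (a k) = (omega1 k a i + a k, omega2 k a (a k - i)) := by
          rw [add_e, hfst, hsnd]
          simp
        rw [hc, mem_S_iff_delta2 k a hk ha0 hmono] at h0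
        obtain ⟨-, -, h03⟩ := h0
        simp only [] at h03
        rw [hsum2] at h03
        have hle : delta2 k a (omega2 k a (a k - i)) ≤ D + 1 := Nat.le_of_mul_le_mul_right h03 hd
        have hgt : D < delta2 k a (omega2 k a (a k - i)) := by
          by_contra hcon
          push_neg at hcon
          apply hw.2
          rw [mem_S_iff_delta2 k a hk ha0 hmono]
          refine ⟨hw2.1, ⟨D, ?_⟩, ?_⟩
          · rw [hfst, hsnd, hdegw, Nat.mul_comm]
          · rw [hfst, hsnd, hdegw]
            exact Nat.mul_le_mul_right _ hcon
        rw [hsnd]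
        omega
    · rintro ⟨i, hiII, j, hjII, h, hh1, hh2, heq⟩
      have hwi := w_mem_sub k a hk ha0 hmono hgcd hiII
      have hwj := w_mem_sub k a hk ha0 hmono hgcd hjII
      have hin := hstep (w k a i) hwi h (by omega)
      rw [← heq] at hin
      exact hwj.2 hin
  · rintro ⟨⟨i0, hi0⟩, hDelta, hPair⟩
    constructor
    · exact ⟨w k a i0, w_mem_sub k a hk ha0 hmono hgcd hi0⟩
    · intro u hu j hj
      obtain ⟨hII, hueq⟩ := structure2 k a hk ha0 hmono hgcd hDelta hu.1 hu.2
      set i := u.1 % a k with hi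
      obtain ⟨hδ1, hδ2⟩ := hDelta i hII
      have hi1 : 1 ≤ i := hII.1
      have hi2 : i ≤ a k - 1 := hII.2.1
      have hilt : i < a k := by omega
      have hdegw := w_dvd k a hk ha0 hmono hgcd hi1 hilt
      have hw1 := omega1_spec k a hk ha0 hmono hgcd i
      have hw2 := omega2_spec k a hk ha0 hmono hgcd (a k - i)
      set D := deg k a (w k a i) with hD
      have hfst : (w k a i).1 = omega1 k a i := rfl
      have hsnd : (w k a i).2 = omega2 k a (a k - i) := rfl
      rw [hfst] at hδ1
      rw [hsnd] at hδ2
      have hsum1 : omega1 k a i + (omega2 k a (a k - i) + a k) = (D + 1) * a k := by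
        rw [(by ring : (D + 1) * a k = D * a k + a k), ← hdegw]
        omega
      have hsum2 : omega1 k a i + a k + omega2 k a (a k - i) = (D + 1) * a k := by
        rw [(by ring : (D + 1) * a k = D * a k + a k), ← hdegw]
        omega
      rw [hueq]
      rcases (by omega : j = 0 ∨ j = k ∨ (1 ≤ j ∧ j ≤ k - 1)) with hj0 | hjk | ⟨hjm1, hjm2⟩
      · rw [hj0]
        have hc : w k a i + e k a (a 0) = (omega1 k a i, omega2 k a (a k - i) + a k) := by
          rw [add_e, ha0, hfst, hsnd]
          simp
        rw [hc, mem_S_iff_delta1 k a hk ha0 hmono]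
        refine ⟨hw1.1, ⟨D + 1, ?_⟩, ?_⟩
        · simp only []
          exact hsum1.trans (Nat.mul_comm _ _)
        · simp only []
          rw [hsum1, hδ1]
      · rw [hjk]
        have hc : w k a i + e k a (a k) = (omega1 k a i + a k, omega2 k a (a k - i)) := by
          rw [add_e, hfst, hsnd]
          simp
        rw [hc, mem_S_iff_delta2 k a hk ha0 hmono]
        refine ⟨hw2.1, ⟨D + 1, ?_⟩, ?_⟩
        · simp only []
          exact hsum2.trans (Nat.mul_comm _ _)
        · simp only []
          rw [hsum2, hδ2]
      · by_contra hnot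
        have hjlt : a j ≤ a k := a_le k a hmono (by omega)
        have hvS' : w k a i + e k a (a j) ∈ S' k a := by
          rw [S'_char k a hk ha0 hmono]
          have hc : w k a i + e k a (a j)
              = (omega1 k a i + a j, omega2 k a (a k - i) + (a k - a j)) := rfl
          rw [hc]
          refine ⟨?_, ?_, ?_⟩
          · refine ⟨D + 1, ?_⟩
            simp only []
            have h7 : omega1 k a i + a j + (omega2 k a (a k - i) + (a k - a j))
                = omega1 k a i + (omega2 k a (a k - i) + a k) := by omega
            rw [h7, hsum1]
            exact Nat.mul_comm _ _
          · exact S1_add k a hw1.1 (a_mem_S1 k a hjm1 (by omega))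
          · exact S2_add k a hw2.1 (gen_mem_S2 k a (by omega))
        obtain ⟨hII', hveq⟩ := structure2 k a hk ha0 hmono hgcd hDelta hvS' hnot
        exact hPair ⟨i, hII, _, hII', j, hjm1, hjm2, by rw [← hveq]⟩

end ProjMonomialCurve
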